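/- arXiv:0906.1488 — 3 statements merged into one kernel-verified Lean document; each statement's English description precedes it below -/
import Mathlib

section
/- Let E be a finite-dimensional vector space (or finite free module) over a field of characteristic zero, and for 0 ≤ p ≤ k−1 let φ_p : S^p E ⊗ Λ^{k−p} E → S^{p+1} E ⊗ Λ^{k−p−1} E be the Koszul differential, given on basis elements by φ_p(e_{i_1}·…·e_{i_p} ⊗ e_{j_1}∧…∧e_{j_{k−p}}) = Σ_{t=1}^{k−p} (−1)^{t−1} e_{i_1}·…·e_{i_p}·e_{j_t} ⊗ e_{j_1}∧…∧ê_{j_t}∧…∧e_{j_{k−p}}. Then the Koszul complex 0 → Λ^k E → S^1E⊗Λ^{k−1}E → … → S^kE → 0 is exact. -/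
/-!
STATEMENT 0: Let E be a finite-dimensional vector space over a field of characteristic
zero (modelled here as the free module with basis indexed by Fin n, so that
S^p E ⊗ Λ^q E has canonical basis Sym (Fin n) p × {q-element subsets of Fin n}), and for
0 ≤ p ≤ k−1 let φ_p : S^p E ⊗ Λ^{k−p} E → S^{p+1} E ⊗ Λ^{k−p−1} E be the Koszul
differential, given on basis elements by
φ_p(e_{i_1}·…·e_{i_p} ⊗ e_{j_1}∧…∧e_{j_{k−p}}) =
Σ_t (−1)^{t−1} e_{i_1}·…·e_{i_p}·e_{j_t} ⊗ e_{j_1}∧…∧ê_{j_t}∧…∧e_{j_{k−p}}.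
Then the Koszul complex 0 → Λ^k E → S^1E⊗Λ^{k−1}E → … → S^kE → 0 is exact.
-/

open Finset

namespace Koszul

variable (K : Type*) [Field K] [CharZero K] (n : ℕ)

/-- Coordinates of `S^p E ⊗ Λ^q E` for `E` a vector space with basis indexed by `Fin n`:
functions on the canonical basis (degree-`p` monomials ⊗ `q`-element subsets). -/
abbrev SL (p q : ℕ) : Type _ := (Sym (Fin n) p × {s : Finset (Fin n) // s.card = q}) → K

/-- The Koszul differential `φ_p : S^p E ⊗ Λ^{q+1} E → S^{p+1} E ⊗ Λ^q E`, defined on basis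
elements by
`φ(m ⊗ e_{j_1}∧…∧e_{j_{q+1}}) = Σ_t (−1)^{t−1} (m·e_{j_t}) ⊗ e_{j_1}∧…∧ê_{j_t}∧…∧e_{j_{q+1}}`
(written here in the dual coordinates). -/
noncomputable def phi (p q : ℕ) : SL K n p (q + 1) →ₗ[K] SL K n (p + 1) q where
  toFun F := fun ms =>
    ∑ j : Fin n,
      if h : (j ∈ (ms.1 : Multiset (Fin n)) ∧ j ∉ ms.2.1) then
        ((-1 : K) ^ (ms.2.1.filter (fun x => x < j)).card) *
          F (⟨(ms.1 : Multiset (Fin n)).erase j, by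
                rw [Multiset.card_erase_of_mem h.1]
                simp [ms.1.2]⟩,
             ⟨insert j ms.2.1, by rw [card_insert_of_notMem h.2, ms.2.2]⟩)
      else 0
  map_add' F G := by
    funext ms
    simp only [Pi.add_apply]
    rw [← Finset.sum_add_distrib]
    refine Finset.sum_congr rfl fun j _ => ?_
    split_ifs with h
    · ring
    · rw [add_zero]
  map_smul' c F := by
    funext ms
    simp only [RingHom.id_apply, Pi.smul_apply, smul_eq_mul, Finset.mul_sum]
    refine Finset.sum_congr rfl fun j _ => ?_
    split_ifs with h
    · ring
    · rw [mul_zero]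

noncomputable def sgn (s : Finset (Fin n)) (j : Fin n) : K :=
  (-1) ^ (s.filter (fun x => x < j)).card

omit [CharZero K] in
lemma sgn_insert {s : Finset (Fin n)} {i j : Fin n} (hi : i ∉ s) :
    sgn K n (insert i s) j = (if i < j then -1 else 1) * sgn K n s j := by
  unfold sgn
  rw [Finset.filter_insert]
  split_ifs with h
  · rw [Finset.card_insert_of_notMem (by simp [hi]), pow_succ]
    ring
  · ring

omit [CharZero K] in
lemma sgn_mul_self (s : Finset (Fin n)) (j : Fin n) : sgn K n s j * sgn K n s j = 1 := by
  unfold sgn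
  rw [← pow_add]
  exact Even.neg_one_pow ⟨_, rfl⟩

omit [CharZero K] in
lemma if_lt_neg {i j : Fin n} (hij : i ≠ j) :
    (if i < j then (-1:K) else 1) = -(if j < i then -1 else 1) := by
  rcases lt_or_gt_of_ne hij with h | h
  · simp [h, lt_asymm h]
  · simp [h, lt_asymm h]

noncomputable def PhiRaw (G : Multiset (Fin n) → Finset (Fin n) → K)
    (m : Multiset (Fin n)) (s : Finset (Fin n)) : K :=
  ∑ i : Fin n, if i ∈ m ∧ i ∉ s then
    sgn K n s i * G (m.erase i) (insert i s) else 0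

noncomputable def HRaw (G : Multiset (Fin n) → Finset (Fin n) → K)
    (m : Multiset (Fin n)) (s : Finset (Fin n)) : K :=
  ∑ j : Fin n, if j ∈ s then
    ((m.count j + 1 : ℕ) : K) * sgn K n (s.erase j) j * G (j ::ₘ m) (s.erase j) else 0

omit [CharZero K] in
lemma ite_mul_sum {α : Type*} [Fintype α] (P : Prop) [Decidable P] (a : K)
    (Q : α → Prop) [∀ j, Decidable (Q j)] (b : α → K) :
    (if P then a * ∑ j, (if Q j then b j else 0) else 0)
      = ∑ j, if P ∧ Q j then a * b j else 0 := by
  split_ifs with h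
  · rw [Finset.mul_sum]
    refine Finset.sum_congr rfl fun j _ => ?_
    by_cases h2 : Q j
    · rw [if_pos h2, if_pos ⟨h, h2⟩]
    · rw [if_neg h2, if_neg (fun hc => h2 hc.2), mul_zero]
  · exact (Finset.sum_eq_zero fun j _ => by rw [if_neg (fun hc => h hc.1)]).symm

omit [CharZero K] in
lemma PhiRaw_congr {G G' : Multiset (Fin n) → Finset (Fin n) → K}
    (m : Multiset (Fin n)) (s : Finset (Fin n))
    (h : ∀ i : Fin n, i ∈ m → i ∉ s → G (m.erase i) (insert i s) = G' (m.erase i) (insert i s)) :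
    PhiRaw K n G m s = PhiRaw K n G' m s := by
  refine Finset.sum_congr rfl fun i _ => ?_
  split_ifs with hc
  · rw [h i hc.1 hc.2]
  · rfl

omit [CharZero K] in
lemma HRaw_congr {G G' : Multiset (Fin n) → Finset (Fin n) → K}
    (m : Multiset (Fin n)) (s : Finset (Fin n))
    (h : ∀ j : Fin n, j ∈ s → G (j ::ₘ m) (s.erase j) = G' (j ::ₘ m) (s.erase j)) :
    HRaw K n G m s = HRaw K n G' m s := by
  refine Finset.sum_congr rfl fun j _ => ?_
  split_ifs with hc
  · rw [h j hc]
  · rfl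

omit [CharZero K] in
lemma HRaw_zero (G : Multiset (Fin n) → Finset (Fin n) → K)
    (m : Multiset (Fin n)) (s : Finset (Fin n))
    (h : ∀ j : Fin n, j ∈ s → G (j ::ₘ m) (s.erase j) = 0) :
    HRaw K n G m s = 0 := by
  refine Finset.sum_eq_zero fun j _ => ?_
  split_ifs with hc
  · rw [h j hc, mul_zero]
  · rfl

lemma phiRaw_phiRaw (G : Multiset (Fin n) → Finset (Fin n) → K)
    (m : Multiset (Fin n)) (s : Finset (Fin n)) :
    PhiRaw K n (fun m' s' => PhiRaw K n G m' s') m s = 0 := by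
  set u : Fin n → Fin n → K := fun i j =>
    if (i ∈ m ∧ i ∉ s) ∧ (j ∈ m.erase i ∧ j ∉ insert i s) then
      sgn K n s i * (sgn K n (insert i s) j * G ((m.erase i).erase j) (insert j (insert i s)))
    else 0 with hu
  have hanti : ∀ i j, u i j = - u j i := by
    intro i j
    by_cases hij : i = j
    · subst hij
      rw [hu]; simp
    rw [hu]
    simp only
    by_cases hC : i ∈ m ∧ j ∈ m ∧ i ∉ s ∧ j ∉ s
    · obtain ⟨him, hjm, his, hjs⟩ := hC
      rw [if_pos ⟨⟨him, his⟩, ⟨(Multiset.mem_erase_of_ne (Ne.symm hij)).2 hjm, by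
            simp [Finset.mem_insert, Ne.symm hij, hjs]⟩⟩,
          if_pos ⟨⟨hjm, hjs⟩, ⟨(Multiset.mem_erase_of_ne hij).2 him, by
            simp [Finset.mem_insert, hij, his]⟩⟩]
      rw [Multiset.erase_comm, Finset.insert_comm,
          sgn_insert K n his, sgn_insert K n hjs, if_lt_neg K n hij]
      ring
    · rw [if_neg, if_neg]
      · rw [neg_zero]
      · rintro ⟨⟨hjm, hjs⟩, him, his⟩
        simp only [Finset.mem_insert, not_or] at his
        exact hC ⟨(Multiset.mem_erase_of_ne his.1).1 him, hjm, his.2, hjs⟩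
      · rintro ⟨⟨him, his⟩, hjm, hjs⟩
        simp only [Finset.mem_insert, not_or] at hjs
        exact hC ⟨him, (Multiset.mem_erase_of_ne hjs.1).1 hjm, his, hjs.2⟩
  have hS : PhiRaw K n (fun m' s' => PhiRaw K n G m' s') m s
      = ∑ i : Fin n, ∑ j : Fin n, u i j := by
    unfold PhiRaw
    refine Finset.sum_congr rfl fun i _ => ?_
    rw [ite_mul_sum]
  rw [hS]
  have hneg : (∑ i : Fin n, ∑ j : Fin n, u i j) = -(∑ i : Fin n, ∑ j : Fin n, u i j) := by
    calc (∑ i : Fin n, ∑ j : Fin n, u i j) = ∑ i : Fin n, ∑ j : Fin n, -(u j i) :=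
          Finset.sum_congr rfl fun i _ => Finset.sum_congr rfl fun j _ => hanti i j
    _ = -(∑ i : Fin n, ∑ j : Fin n, u j i) := by
          rw [← Finset.sum_neg_distrib]
          exact Finset.sum_congr rfl fun i _ => by rw [Finset.sum_neg_distrib]
    _ = -(∑ i : Fin n, ∑ j : Fin n, u i j) := by rw [Finset.sum_comm]
  linear_combination hneg / 2

lemma sgn_erase {s : Finset (Fin n)} {i j : Fin n} (hj : j ∈ s) :
    sgn K n s i = (if j < i then -1 else 1) * sgn K n (s.erase j) i := by
  conv_lhs => rw [← Finset.insert_erase hj]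
  exact sgn_insert K n (Finset.notMem_erase j s)

lemma homotopy_raw (G : Multiset (Fin n) → Finset (Fin n) → K)
    (m : Multiset (Fin n)) (s : Finset (Fin n)) :
    PhiRaw K n (fun m' s' => HRaw K n G m' s') m s
      + HRaw K n (fun m' s' => PhiRaw K n G m' s') m s
      = ((Multiset.card m + s.card : ℕ) : K) * G m s := by
  set t1 : Fin n → Fin n → K := fun i j =>
    if (i ∈ m ∧ i ∉ s) ∧ j ∈ insert i s then
      sgn K n s i * ((((m.erase i).count j + 1 : ℕ) : K) *
        sgn K n ((insert i s).erase j) j * G (j ::ₘ m.erase i) ((insert i s).erase j))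
    else 0 with ht1
  set t2 : Fin n → Fin n → K := fun j i =>
    if j ∈ s ∧ (i ∈ j ::ₘ m ∧ i ∉ s.erase j) then
      (((m.count j + 1 : ℕ) : K) * sgn K n (s.erase j) j) *
        (sgn K n (s.erase j) i * G ((j ::ₘ m).erase i) (insert i (s.erase j)))
    else 0 with ht2
  have hL1 : PhiRaw K n (fun m' s' => HRaw K n G m' s') m s
      = ∑ i : Fin n, ∑ j : Fin n, t1 i j := by
    unfold PhiRaw HRaw
    refine Finset.sum_congr rfl fun i _ => ?_
    rw [ite_mul_sum]
  have hL2 : HRaw K n (fun m' s' => PhiRaw K n G m' s') m s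
      = ∑ j : Fin n, ∑ i : Fin n, t2 j i := by
    unfold PhiRaw HRaw
    refine Finset.sum_congr rfl fun j _ => ?_
    rw [ite_mul_sum]
  -- off-diagonal cancellation
  have hcross : ∀ i j : Fin n, j ≠ i → t1 i j + t2 j i = 0 := by
    intro i j hji
    have hij : i ≠ j := hji.symm
    by_cases hC : i ∈ m ∧ i ∉ s ∧ j ∈ s
    · obtain ⟨him, his, hjs⟩ := hC
      rw [ht1, ht2]
      simp only
      rw [if_pos ⟨⟨him, his⟩, Finset.mem_insert_of_mem hjs⟩,
          if_pos ⟨hjs, Multiset.mem_cons_of_mem him,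
            fun hc => his (Finset.mem_of_mem_erase hc)⟩,
          Finset.erase_insert_of_ne hij, Multiset.count_erase_of_ne hji,
          Multiset.erase_cons_tail m hji,
          sgn_insert K n (fun hc => his (Finset.mem_of_mem_erase hc)),
          sgn_erase K n hjs (i := i)]
      rcases lt_or_gt_of_ne hij with h | h <;> simp only [if_pos h, if_neg (lt_asymm h)] <;> ring
    · rw [ht1, ht2]
      simp only
      rw [if_neg, if_neg, add_zero]
      · rintro ⟨hjs, him, hie⟩
        rcases Multiset.mem_cons.1 him with h | h
        · exact hji h.symm
        · exact hC ⟨h, fun hiss => hie (Finset.mem_erase.2 ⟨hij, hiss⟩), hjs⟩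
      · rintro ⟨⟨him, his⟩, hjmem⟩
        exact hC ⟨him, his, (Finset.mem_insert.1 hjmem).resolve_left hji⟩
  -- diagonal terms
  have hd1 : ∀ i : Fin n, t1 i i = (if i ∉ s then ((m.count i : ℕ) : K) else 0) * G m s := by
    intro i
    rw [ht1]
    simp only
    by_cases his : i ∈ s
    · rw [if_neg (fun hc => hc.1.2 his), if_neg (fun hc => hc his), zero_mul]
    · by_cases him : i ∈ m
      · rw [if_pos ⟨⟨him, his⟩, Finset.mem_insert_self i s⟩, if_pos his,
            Finset.erase_insert his, Multiset.cons_erase him, Multiset.count_erase_self]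
        have hc : Multiset.count i m - 1 + 1 = Multiset.count i m :=
          Nat.succ_pred_eq_of_pos (Multiset.count_pos.2 him)
        rw [hc]
        linear_combination ((m.count i : ℕ) : K) * G m s * sgn_mul_self K n s i
      · rw [if_neg (fun hc => him hc.1.1), Multiset.count_eq_zero_of_notMem him]
        simp
  have hd2 : ∀ i : Fin n, t2 i i = (if i ∈ s then ((m.count i + 1 : ℕ) : K) else 0) * G m s := by
    intro i
    rw [ht2]
    simp only
    by_cases his : i ∈ s
    · rw [if_pos ⟨his, Multiset.mem_cons_self i m, Finset.notMem_erase i s⟩,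
          Multiset.erase_cons_head, Finset.insert_erase his, if_pos his]
      linear_combination ((m.count i + 1 : ℕ) : K) * G m s * sgn_mul_self K n (s.erase i) i
    · rw [if_neg (fun hc => his hc.1), if_neg his, zero_mul]
  -- assemble
  rw [hL1, hL2,
      show (∑ j : Fin n, ∑ i : Fin n, t2 j i) = ∑ i : Fin n, ∑ j : Fin n, t2 j i
        from Finset.sum_comm,
      ← Finset.sum_add_distrib]
  have hinner : ∀ i : Fin n, ((∑ j : Fin n, t1 i j) + ∑ j : Fin n, t2 j i)
      = t1 i i + t2 i i := by
    intro i
    rw [← Finset.sum_add_distrib]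
    exact Finset.sum_eq_single i (fun j _ hj => hcross i j hj)
      (fun h => absurd (Finset.mem_univ i) h)
  rw [Finset.sum_congr rfl fun i _ => hinner i]
  have hterm : ∀ i : Fin n, t1 i i + t2 i i
      = ((m.count i : ℕ) : K) * G m s + (if i ∈ s then (1:K) else 0) * G m s := by
    intro i
    rw [hd1, hd2]
    by_cases his : i ∈ s
    · rw [if_neg (fun h => h his), if_pos his, if_pos his]
      push_cast
      ring
    · rw [if_pos his, if_neg his, if_neg his]
  rw [Finset.sum_congr rfl fun i _ => hterm i, Finset.sum_add_distrib,
      ← Finset.sum_mul, ← Finset.sum_mul]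
  have hcard : (∑ i : Fin n, ((m.count i : ℕ) : K)) = ((Multiset.card m : ℕ) : K) := by
    rw [← Nat.cast_sum]
    congr 1
    rw [← Multiset.toFinset_sum_count_eq m]
    exact (Finset.sum_subset (Finset.subset_univ _)
      (fun x _ hx => Multiset.count_eq_zero.2 (by simpa using hx))).symm
  have hcard2 : (∑ i : Fin n, (if i ∈ s then (1:K) else 0)) = (s.card : K) := by simp
  rw [hcard, hcard2]
  push_cast
  ring

omit [CharZero K] in
lemma PhiRaw_of_zero (G : Multiset (Fin n) → Finset (Fin n) → K) (s : Finset (Fin n)) :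
    PhiRaw K n G 0 s = 0 :=
  Finset.sum_eq_zero fun i _ => if_neg (fun hc => Multiset.notMem_zero i hc.1)

omit [CharZero K] in
lemma HRaw_of_empty (G : Multiset (Fin n) → Finset (Fin n) → K) (m : Multiset (Fin n)) :
    HRaw K n G m ∅ = 0 :=
  Finset.sum_eq_zero fun j _ => if_neg (by simp)

/-- Evaluation of a coordinate function at raw data, with junk value otherwise. -/
noncomputable def ev {p q : ℕ} (F : SL K n p q)
    (m : Multiset (Fin n)) (s : Finset (Fin n)) : K :=
  if h : Multiset.card m = p ∧ s.card = q then F (⟨m, h.1⟩, ⟨s, h.2⟩) else 0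

omit [CharZero K] in
lemma ev_apply {p q : ℕ} (F : SL K n p q) (m : Multiset (Fin n)) (s : Finset (Fin n))
    (hm : Multiset.card m = p) (hs : s.card = q) :
    ev K n F m s = F (⟨m, hm⟩, ⟨s, hs⟩) := by
  unfold ev
  rw [dif_pos ⟨hm, hs⟩]

omit [CharZero K] in
lemma ev_zero (p q : ℕ) (m : Multiset (Fin n)) (s : Finset (Fin n)) :
    ev K n (0 : SL K n p q) m s = 0 := by
  unfold ev
  split_ifs <;> rfl

omit [CharZero K] in
lemma phi_eq (p q : ℕ) (F : SL K n p (q + 1))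
    (ms : Sym (Fin n) (p + 1) × {s : Finset (Fin n) // s.card = q}) :
    phi K n p q F ms = PhiRaw K n (ev K n F) (ms.1 : Multiset (Fin n)) ms.2.1 := by
  unfold phi PhiRaw
  simp only [LinearMap.coe_mk, AddHom.coe_mk]
  refine Finset.sum_congr rfl fun j _ => ?_
  by_cases h : j ∈ (ms.1 : Multiset (Fin n)) ∧ j ∉ ms.2.1
  · rw [dif_pos h, if_pos h, ev_apply K n F _ _
      (by rw [Multiset.card_erase_of_mem h.1]; simp [ms.1.2])
      (by rw [card_insert_of_notMem h.2, ms.2.2])]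
    rfl
  · rw [dif_neg h, if_neg h]

/-- The contracting homotopy. -/
noncomputable def hmap (p q : ℕ) (F : SL K n (p + 1) q) : SL K n p (q + 1) :=
  fun ms => HRaw K n (ev K n F) (ms.1 : Multiset (Fin n)) ms.2.1

omit [CharZero K] in
lemma ev_phi (p q : ℕ) (F : SL K n p (q + 1)) (m : Multiset (Fin n)) (s : Finset (Fin n))
    (hm : Multiset.card m = p + 1) (hs : s.card = q) :
    ev K n (phi K n p q F) m s = PhiRaw K n (ev K n F) m s := by
  rw [ev_apply K n _ m s hm hs, phi_eq]
  rfl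

omit [CharZero K] in
lemma ev_hmap (p q : ℕ) (F : SL K n (p + 1) q) (m : Multiset (Fin n)) (s : Finset (Fin n))
    (hm : Multiset.card m = p) (hs : s.card = q + 1) :
    ev K n (hmap K n p q F) m s = HRaw K n (ev K n F) m s := by
  rw [ev_apply K n _ m s hm hs]
  rfl


/-- Key pointwise identity: `φ (h F) = (p+1+q) F - h (φ F)` evaluated. -/
lemma phi_hmap (p q : ℕ) (F : SL K n (p + 1) q)
    (ms : Sym (Fin n) (p + 1) × {s : Finset (Fin n) // s.card = q}) :
    phi K n p q (hmap K n p q F) ms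
      = (((p + 1) + q : ℕ) : K) * F ms
        - HRaw K n (fun m' s' => PhiRaw K n (ev K n F) m' s')
            (ms.1 : Multiset (Fin n)) ms.2.1 := by
  have hm : Multiset.card (ms.1 : Multiset (Fin n)) = p + 1 := ms.1.2
  have hs : (ms.2.1 : Finset (Fin n)).card = q := ms.2.2
  calc phi K n p q (hmap K n p q F) ms
      = PhiRaw K n (ev K n (hmap K n p q F)) (ms.1 : Multiset (Fin n)) ms.2.1 :=
        phi_eq K n p q _ ms
    _ = PhiRaw K n (fun m' s' => HRaw K n (ev K n F) m' s') (ms.1 : Multiset (Fin n)) ms.2.1 :=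
        PhiRaw_congr K n _ _ (fun i him his => ev_hmap K n _ _ _ _ _
          (by rw [Multiset.card_erase_of_mem him, hm]; rfl)
          (by rw [card_insert_of_notMem his, hs]))
    _ = ((Multiset.card (ms.1 : Multiset (Fin n)) + (ms.2.1 : Finset (Fin n)).card : ℕ) : K)
          * ev K n F (ms.1 : Multiset (Fin n)) ms.2.1
        - HRaw K n (fun m' s' => PhiRaw K n (ev K n F) m' s')
            (ms.1 : Multiset (Fin n)) ms.2.1 := by
        rw [← homotopy_raw K n (ev K n F) (ms.1 : Multiset (Fin n)) ms.2.1]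
        ring
    _ = _ := by
        rw [hm, hs, ev_apply K n F _ _ hm hs]
        rfl

lemma stmt_middle (p q : ℕ) :
    Function.Exact (phi K n p (q + 1)) (phi K n (p + 1) q) := by
  intro y
  constructor
  · intro hy
    have hc : (((p + 1) + (q + 1) : ℕ) : K) ≠ 0 := Nat.cast_ne_zero.2 (by omega)
    refine ⟨(((p + 1) + (q + 1) : ℕ) : K)⁻¹ • hmap K n p (q + 1) y, ?_⟩
    rw [map_smul]
    funext ms
    have hm : Multiset.card (ms.1 : Multiset (Fin n)) = p + 1 := ms.1.2
    have hs : (ms.2.1 : Finset (Fin n)).card = q + 1 := ms.2.2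
    have h0 : HRaw K n (fun m' s' => PhiRaw K n (ev K n y) m' s')
        (ms.1 : Multiset (Fin n)) ms.2.1 = 0 := by
      refine HRaw_zero K n _ _ _ (fun j hjs => ?_)
      rw [← ev_phi K n (p + 1) q y _ _ (by rw [Multiset.card_cons, hm])
            (by rw [Finset.card_erase_of_mem hjs, hs]; rfl), hy, ev_zero]
    rw [Pi.smul_apply, smul_eq_mul, phi_hmap, h0, sub_zero, ← mul_assoc,
        inv_mul_cancel₀ hc, one_mul]
  · rintro ⟨x, rfl⟩
    funext ms
    have hm : Multiset.card (ms.1 : Multiset (Fin n)) = p + 1 + 1 := ms.1.2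
    have hs : (ms.2.1 : Finset (Fin n)).card = q := ms.2.2
    rw [Pi.zero_apply, phi_eq,
        PhiRaw_congr K n _ _ (fun i him his => ev_phi K n p (q + 1) x _ _
          (by rw [Multiset.card_erase_of_mem him, hm]; rfl)
          (by rw [card_insert_of_notMem his, hs])),
        phiRaw_phiRaw]

lemma stmt_inj (q : ℕ) : Function.Injective (phi K n 0 q) := by
  have key : ∀ F : SL K n 0 (q + 1), phi K n 0 q F = 0 → F = 0 := by
    intro F hF
    funext ms
    have hm : Multiset.card (ms.1 : Multiset (Fin n)) = 0 := ms.1.2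
    have hs : (ms.2.1 : Finset (Fin n)).card = q + 1 := ms.2.2
    have hm0 : (ms.1 : Multiset (Fin n)) = 0 := Multiset.card_eq_zero.1 hm
    have h1 : PhiRaw K n (fun m' s' => HRaw K n (ev K n F) m' s')
        (ms.1 : Multiset (Fin n)) ms.2.1 = 0 := by
      rw [hm0]; exact PhiRaw_of_zero K n _ _
    have h2 : HRaw K n (fun m' s' => PhiRaw K n (ev K n F) m' s')
        (ms.1 : Multiset (Fin n)) ms.2.1 = 0 := by
      refine HRaw_zero K n _ _ _ (fun j hjs => ?_)
      rw [← ev_phi K n 0 q F _ _ (by rw [Multiset.card_cons, hm])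
            (by rw [Finset.card_erase_of_mem hjs, hs]; rfl), hF, ev_zero]
    have hh := homotopy_raw K n (ev K n F) (ms.1 : Multiset (Fin n)) ms.2.1
    rw [h1, h2, hm, hs, add_zero, ev_apply K n F _ _ hm hs] at hh
    have hc : ((0 + (q + 1) : ℕ) : K) ≠ 0 := Nat.cast_ne_zero.2 (by omega)
    exact (mul_eq_zero.mp hh.symm).resolve_left hc
  intro a b hab
  have := key (a - b) (by rw [map_sub, hab, sub_self])
  exact sub_eq_zero.mp this

lemma stmt_surj (p : ℕ) : Function.Surjective (phi K n p 0) := by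
  intro y
  have hc : (((p + 1) + 0 : ℕ) : K) ≠ 0 := Nat.cast_ne_zero.2 (by omega)
  refine ⟨(((p + 1) + 0 : ℕ) : K)⁻¹ • hmap K n p 0 y, ?_⟩
  rw [map_smul]
  funext ms
  have h0 : HRaw K n (fun m' s' => PhiRaw K n (ev K n y) m' s')
      (ms.1 : Multiset (Fin n)) ms.2.1 = 0 := by
    rw [Finset.card_eq_zero.1 ms.2.2]
    exact HRaw_of_empty K n _ _
  rw [Pi.smul_apply, smul_eq_mul, phi_hmap, h0, sub_zero, ← mul_assoc,
      inv_mul_cancel₀ hc, one_mul]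

/-- the Koszul complex
`0 → Λ^k E → S^1E⊗Λ^{k−1}E → … → S^kE → 0` is exact. -/
theorem stmt0 (k : ℕ) (hk : 1 ≤ k) :
    (∀ p q : ℕ, p + q + 2 = k →
      Function.Exact (phi K n p (q + 1)) (phi K n (p + 1) q)) ∧
    (∀ q : ℕ, q + 1 = k → Function.Injective (phi K n 0 q)) ∧
    (∀ p : ℕ, p + 1 = k → Function.Surjective (phi K n p 0)) := by
  exact ⟨fun p q _ => stmt_middle K n p q, fun q _ => stmt_inj K n q,
    fun p _ => stmt_surj K n p⟩

end Koszul
end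

section
/- For a chain morphism ρ : A_* → B_*, there is a canonical isomorphism H_n(s(ρ)) ≅ ker(ρ̂ : Ĥ_n(A,ρ) → B_n), where ρ̂[(a,b)] = ρ(a) − d_B(b). -/
/-!
STATEMENT 8: For a chain morphism ρ : A_* → B_*, there is a canonical isomorphism
H_n(s(ρ)) ≅ ker(ρ̂ : Ĥ_n(A,ρ) → B_n), where ρ̂[(a,b)] = ρ(a) − d_B(b), s(ρ) is the
simple complex (cone shifted by −1) of ρ, and Ĥ_n(A,ρ) is the modified homology group.
(Stated with the degree written as n+1.)  The canonical isomorphism is realised by the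
map induced by the inclusion of cone cycles into pairs: it is injective with image
exactly the kernel of ρ̂.
-/

open CategoryTheory

namespace ArithK

variable (C D : ChainComplex AddCommGrpCat ℤ) (ρ : C ⟶ D)

lemma dd_apply (E : ChainComplex AddCommGrpCat ℤ) (i j k : ℤ) (x : E.X i) :
    E.d j k (E.d i j x) = 0 :=
  by rw [← ConcreteCategory.comp_apply, E.d_comp_d]; rfl

lemma comm_apply (i j : ℤ) (x : C.X i) :
    D.d i j (ρ.f i x) = ρ.f j (C.d i j x) :=
  by rw [← ConcreteCategory.comp_apply, ← ConcreteCategory.comp_apply, ρ.comm]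

lemma d_congr_zero (E : ChainComplex AddCommGrpCat ℤ) {i j j' : ℤ} (h : j = j') (x : E.X i)
    (hx : E.d i j x = 0) : E.d i j' x = 0 := by subst h; exact hx

def cyclePairs (n : ℤ) : AddSubgroup (C.X n × D.X (n + 1)) where
  carrier := {p | C.d n (n - 1) p.1 = 0}
  add_mem' := by
    intro a b ha hb
    simp only [Set.mem_setOf_eq, Prod.fst_add, map_add] at *
    rw [ha, hb, add_zero]
  zero_mem' := by simp
  neg_mem' := by
    intro a ha
    simp only [Set.mem_setOf_eq, Prod.fst_neg, map_neg] at *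
    rw [ha, neg_zero]

def relIn (n : ℤ) : AddSubgroup (cyclePairs C D n) :=
  AddSubgroup.closure
    ({p | ∃ b' : D.X (n + 1 + 1), (p : C.X n × D.X (n + 1)) = (0, D.d (n + 1 + 1) (n + 1) b')} ∪
     {p | ∃ a' : C.X (n + 1), (p : C.X n × D.X (n + 1)) = (C.d (n + 1) n a', ρ.f (n + 1) a')})

abbrev ModH (n : ℤ) := cyclePairs C D n ⧸ relIn C D ρ n

/-- Cycles of the simple complex `s(ρ)` in degree `j`. -/
def cycS (j : ℤ) : AddSubgroup (C.X j × D.X (j + 1)) where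
  carrier := {p | C.d j (j - 1) p.1 = 0 ∧ ρ.f j p.1 - D.d (j + 1) j p.2 = 0}
  add_mem' := by
    rintro a b ⟨ha1, ha2⟩ ⟨hb1, hb2⟩
    refine ⟨?_, ?_⟩
    · show C.d j (j - 1) (a.1 + b.1) = 0
      rw [map_add, ha1, hb1, add_zero]
    · show ρ.f j (a.1 + b.1) - D.d (j + 1) j (a.2 + b.2) = 0
      rw [map_add, map_add, show ρ.f j a.1 + ρ.f j b.1 - (D.d (j + 1) j a.2 + D.d (j + 1) j b.2)
            = (ρ.f j a.1 - D.d (j + 1) j a.2) + (ρ.f j b.1 - D.d (j + 1) j b.2) by abel,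
        ha2, hb2, add_zero]
  zero_mem' := by simp
  neg_mem' := by
    rintro a ⟨ha1, ha2⟩
    refine ⟨?_, ?_⟩
    · show C.d j (j - 1) (-a.1) = 0
      rw [map_neg, ha1, neg_zero]
    · show ρ.f j (-a.1) - D.d (j + 1) j (-a.2) = 0
      rw [map_neg, map_neg, show -ρ.f j a.1 - -D.d (j + 1) j a.2
            = -(ρ.f j a.1 - D.d (j + 1) j a.2) by abel, ha2, neg_zero]

/-- Boundaries of the simple complex `s(ρ)` in degree `j`. -/
def bdryS (j : ℤ) : AddSubgroup (cycS C D ρ j) where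
  carrier := {x | ∃ (a' : C.X (j + 1)) (b' : D.X (j + 1 + 1)),
    (x : C.X j × D.X (j + 1)) =
      (C.d (j + 1) j a', ρ.f (j + 1) a' - D.d (j + 1 + 1) (j + 1) b')}
  add_mem' := by
    rintro x y ⟨a1, b1, hx⟩ ⟨a2, b2, hy⟩
    refine ⟨a1 + a2, b1 + b2, ?_⟩
    show ((x : C.X j × D.X (j + 1)) + (y : C.X j × D.X (j + 1))) = _
    rw [hx, hy]
    apply Prod.ext
    · show C.d (j + 1) j a1 + C.d (j + 1) j a2 = C.d (j + 1) j (a1 + a2)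
      rw [map_add]
    · show (ρ.f (j + 1) a1 - D.d (j + 1 + 1) (j + 1) b1) +
          (ρ.f (j + 1) a2 - D.d (j + 1 + 1) (j + 1) b2) =
          ρ.f (j + 1) (a1 + a2) - D.d (j + 1 + 1) (j + 1) (b1 + b2)
      rw [map_add, map_add]
      abel
  zero_mem' := ⟨0, 0, by simp; rfl⟩
  neg_mem' := by
    rintro x ⟨a1, b1, hx⟩
    refine ⟨-a1, -b1, ?_⟩
    show -(x : C.X j × D.X (j + 1)) = _
    rw [hx]
    apply Prod.ext
    · show -(C.d (j + 1) j a1) = C.d (j + 1) j (-a1)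
      rw [map_neg]
    · show -(ρ.f (j + 1) a1 - D.d (j + 1 + 1) (j + 1) b1) =
          ρ.f (j + 1) (-a1) - D.d (j + 1 + 1) (j + 1) (-b1)
      rw [map_neg, map_neg]
      abel

/-- Homology of the simple complex `s(ρ)` in degree `j`. -/
abbrev Hs (j : ℤ) := cycS C D ρ j ⧸ bdryS C D ρ j

/-- Inclusion of cone cycles into pairs. -/
noncomputable def alphaCore (n : ℤ) : cycS C D ρ (n + 1) →+ cyclePairs C D (n + 1) where
  toFun x := ⟨x.1, x.2.1⟩
  map_zero' := rfl
  map_add' x y := rfl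

/-- `H_{n+1}(s(ρ)) → Ĥ_{n+1}(A,ρ)`. -/
noncomputable def alphaMap (n : ℤ) : Hs C D ρ (n + 1) →+ ModH C D ρ (n + 1) :=
  QuotientAddGroup.lift (bdryS C D ρ (n + 1))
    ((QuotientAddGroup.mk' (relIn C D ρ (n + 1))).comp (alphaCore C D ρ n))
    (by
      rintro x ⟨a', b', hx⟩
      rw [AddMonoidHom.mem_ker, AddMonoidHom.comp_apply, QuotientAddGroup.mk'_apply,
        QuotientAddGroup.eq_zero_iff]
      have hmem : alphaCore C D ρ n x =
          (⟨(C.d (n + 1 + 1) (n + 1) a', ρ.f (n + 1 + 1) a'), by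
              show C.d (n + 1) (n + 1 - 1) _ = 0
              exact dd_apply C (n + 1 + 1) (n + 1) (n + 1 - 1) a'⟩ : cyclePairs C D (n + 1)) -
            ⟨(0, D.d (n + 1 + 1 + 1) (n + 1 + 1) b'), by
              show C.d (n + 1) (n + 1 - 1) 0 = 0
              simp⟩ := by
        apply Subtype.ext
        show (x : C.X (n + 1) × D.X (n + 1 + 1)) = _
        rw [hx]
        apply Prod.ext
        · show C.d (n + 1 + 1) (n + 1) a' = C.d (n + 1 + 1) (n + 1) a' - 0
          rw [sub_zero]
        · rfl
      rw [hmem]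
      exact sub_mem (AddSubgroup.subset_closure (Or.inr ⟨a', rfl⟩))
        (AddSubgroup.subset_closure (Or.inl ⟨b', rfl⟩)))

/-- `ρ̂ : Ĥ_{n+1}(A,ρ) → B_{n+1}`, `[(a,b)] ↦ ρ(a) − d_B(b)`. -/
noncomputable def rhoHatFull (n : ℤ) : ModH C D ρ (n + 1) →+ D.X (n + 1) :=
  QuotientAddGroup.lift (relIn C D ρ (n + 1))
    { toFun := fun p => ρ.f (n + 1) p.1.1 - D.d (n + 1 + 1) (n + 1) p.1.2
      map_zero' := by simp
      map_add' := fun x y => by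
        show ρ.f (n + 1) (x.1.1 + y.1.1) - D.d (n + 1 + 1) (n + 1) (x.1.2 + y.1.2) = _
        rw [map_add, map_add]
        abel }
    (by
      intro x hx
      refine AddSubgroup.closure_le _ |>.2 ?_ hx
      rintro p (⟨b', hb⟩ | ⟨a', ha⟩) <;>
        rw [SetLike.mem_coe, AddMonoidHom.mem_ker] <;>
        show ρ.f (n + 1) p.1.1 - D.d (n + 1 + 1) (n + 1) p.1.2 = 0
      · have h1 : p.1.1 = 0 := congrArg Prod.fst hb
        have h2 : p.1.2 = D.d (n + 1 + 1 + 1) (n + 1 + 1) b' := congrArg Prod.snd hb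
        rw [h1, h2, map_zero, dd_apply, sub_zero]
      · have h1 : p.1.1 = C.d (n + 1 + 1) (n + 1) a' := congrArg Prod.fst ha
        have h2 : p.1.2 = ρ.f (n + 1 + 1) a' := congrArg Prod.snd ha
        rw [h1, h2, ← comm_apply, sub_self])

/-- The subgroup of `cyclePairs` of elements of the form `(d a', ρ a' − d b')`. -/
def Sgrp (m : ℤ) : AddSubgroup (cyclePairs C D m) where
  carrier := {x | ∃ (a' : C.X (m + 1)) (b' : D.X (m + 1 + 1)),
    (x : C.X m × D.X (m + 1)) =
      (C.d (m + 1) m a', ρ.f (m + 1) a' - D.d (m + 1 + 1) (m + 1) b')}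
  add_mem' := by
    rintro x y ⟨a1, b1, hx⟩ ⟨a2, b2, hy⟩
    refine ⟨a1 + a2, b1 + b2, ?_⟩
    show ((x : C.X m × D.X (m + 1)) + (y : C.X m × D.X (m + 1))) = _
    rw [hx, hy]
    apply Prod.ext
    · show C.d (m + 1) m a1 + C.d (m + 1) m a2 = C.d (m + 1) m (a1 + a2)
      rw [map_add]
    · show (ρ.f (m + 1) a1 - D.d (m + 1 + 1) (m + 1) b1) +
          (ρ.f (m + 1) a2 - D.d (m + 1 + 1) (m + 1) b2) =
          ρ.f (m + 1) (a1 + a2) - D.d (m + 1 + 1) (m + 1) (b1 + b2)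
      rw [map_add, map_add]; abel
  zero_mem' := ⟨0, 0, by simp; rfl⟩
  neg_mem' := by
    rintro x ⟨a1, b1, hx⟩
    refine ⟨-a1, -b1, ?_⟩
    show -(x : C.X m × D.X (m + 1)) = _
    rw [hx]
    apply Prod.ext
    · show -(C.d (m + 1) m a1) = C.d (m + 1) m (-a1)
      rw [map_neg]
    · show -(ρ.f (m + 1) a1 - D.d (m + 1 + 1) (m + 1) b1) =
          ρ.f (m + 1) (-a1) - D.d (m + 1 + 1) (m + 1) (-b1)
      rw [map_neg, map_neg]; abel

lemma relIn_le_Sgrp (m : ℤ) : relIn C D ρ m ≤ Sgrp C D ρ m := by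
  refine AddSubgroup.closure_le _ |>.2 ?_
  rintro p (⟨b', hb⟩ | ⟨a', ha⟩)
  · refine ⟨0, -b', ?_⟩
    rw [hb]
    apply Prod.ext
    · show (0 : C.X m) = C.d (m + 1) m 0
      rw [map_zero]
    · show D.d (m + 1 + 1) (m + 1) b' =
        ρ.f (m + 1) 0 - D.d (m + 1 + 1) (m + 1) (-b')
      rw [map_zero, map_neg, zero_sub, neg_neg]
  · refine ⟨a', 0, ?_⟩
    rw [ha]
    apply Prod.ext
    · rfl
    · show ρ.f (m + 1) a' = ρ.f (m + 1) a' - D.d (m + 1 + 1) (m + 1) 0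
      rw [map_zero, sub_zero]

theorem stmt8 (n : ℤ) :
    Function.Injective (alphaMap C D ρ n) ∧
      (alphaMap C D ρ n).range = (rhoHatFull C D ρ n).ker := by
  constructor
  · rw [injective_iff_map_eq_zero]
    intro x hx
    induction x using QuotientAddGroup.induction_on with
    | H x =>
      have hmem : alphaCore C D ρ n x ∈ relIn C D ρ (n + 1) := by
        rwa [show alphaMap C D ρ n (QuotientAddGroup.mk x)
            = QuotientAddGroup.mk' (relIn C D ρ (n + 1)) (alphaCore C D ρ n x) from rfl,
          QuotientAddGroup.mk'_apply, QuotientAddGroup.eq_zero_iff] at hx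
      obtain ⟨a', b', h⟩ := relIn_le_Sgrp C D ρ (n + 1) hmem
      rw [QuotientAddGroup.eq_zero_iff]
      exact ⟨a', b', h⟩
  · ext z
    constructor
    · rintro ⟨y, rfl⟩
      induction y using QuotientAddGroup.induction_on with
      | H x =>
        rw [AddMonoidHom.mem_ker]
        show ρ.f (n + 1) (x : C.X (n + 1) × D.X (n + 1 + 1)).1
            - D.d (n + 1 + 1) (n + 1) (x : C.X (n + 1) × D.X (n + 1 + 1)).2 = 0
        exact x.2.2
    · intro hz
      induction z using QuotientAddGroup.induction_on with
      | H p =>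
        rw [AddMonoidHom.mem_ker] at hz
        have hz' : ρ.f (n + 1) (p : C.X (n + 1) × D.X (n + 1 + 1)).1
            - D.d (n + 1 + 1) (n + 1) (p : C.X (n + 1) × D.X (n + 1 + 1)).2 = 0 := hz
        refine ⟨QuotientAddGroup.mk (⟨p.1, ⟨p.2, hz'⟩⟩ : cycS C D ρ (n + 1)), ?_⟩
        show QuotientAddGroup.mk' (relIn C D ρ (n + 1)) _ = _
        congr 1

end ArithK
end

section
/- Let R be a λ-ring which is a Q-algebra, with Adams operations ψ^k. Define Ψ^k(x) = Σ_{p=0}^{k} (−1)^{k−p+1}(k−p) s^p(x) λ^{k−p}(x) (the 'secondary Euler characteristic of the Koszul complex'). Then Ψ^k satisfies the Newton recursion Ψ^k(x) = (−1)^{k+1} k λ^k(x) − Σ_{s=1}^{k−1} (−1)^{s} Ψ^{k−s}(x) λ^{s}(x), and consequently Ψ^k(x) = ψ^k(x) for all x and all k ≥ 1. -/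
/-!
STATEMENT 15: Let R be a λ-ring which is a Q-algebra, with Adams operations ψ^k.
Define Ψ^k(x) = Σ_{p=0}^{k} (−1)^{k−p+1}(k−p) s^p(x) λ^{k−p}(x) (the secondary Euler
characteristic of the Koszul complex). Then Ψ^k satisfies the Newton recursion
Ψ^k(x) = (−1)^{k+1} k λ^k(x) − Σ_{s=1}^{k−1} (−1)^{s} Ψ^{k−s}(x) λ^{s}(x),
and consequently Ψ^k(x) = ψ^k(x) for all x and all k ≥ 1.
-/

class LambdaRing (R : Type*) [CommRing R] where
  lam : ℕ → R → R
  lam_zero : ∀ x, lam 0 x = 1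
  lam_one : ∀ x, lam 1 x = x
  lam_add : ∀ k x y, lam k (x + y) = ∑ i ∈ Finset.range (k + 1), lam i x * lam (k - i) y

/-- Symmetric power operations: `s^0 = 1`, `s^k = Σ_{i=1}^k (−1)^{i+1} λ^i s^{k−i}`. -/
def sOp {R : Type*} [CommRing R] (l : ℕ → R) : ℕ → R
  | 0 => 1
  | (k + 1) => ∑ i ∈ Finset.range (k + 1), (-1 : R) ^ i * l (i + 1) * sOp l (k - i)
  termination_by k => k
  decreasing_by omega

/-- Adams operations via the Newton recursion
`ψ^k = ψ^{k−1}λ^1 − ψ^{k−2}λ^2 + … + (−1)^{k−1} k λ^k`, `ψ^1 = id`. -/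
def psiOp {R : Type*} [CommRing R] (l : ℕ → R) : ℕ → R
  | 0 => 0
  | (k + 1) =>
      (∑ i ∈ Finset.range k, (-1 : R) ^ i * l (i + 1) * psiOp l (k - i)) +
        (-1 : R) ^ k * ((k + 1 : ℕ) : R) * l (k + 1)
  termination_by k => k
  decreasing_by omega

/-- The secondary Euler characteristic of the Koszul complex:
`Ψ^k = Σ_{p=0}^{k} (−1)^{k−p+1}(k−p) s^p λ^{k−p}`. -/
def PsiKos {R : Type*} [CommRing R] (l : ℕ → R) (k : ℕ) : R :=
  ∑ p ∈ Finset.range (k + 1),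
    (-1 : R) ^ (k - p + 1) * ((k - p : ℕ) : R) * sOp l p * l (k - p)

section Aux

variable {R : Type*} [CommRing R]

lemma sOp_succ' (l : ℕ → R) (k : ℕ) :
    sOp l (k + 1) = ∑ i ∈ Finset.range (k + 1), (-1 : R) ^ i * l (i + 1) * sOp l (k - i) := by
  rw [sOp]

lemma keyA (l : ℕ → R) (hl : l 0 = 1) (n : ℕ) :
    ∑ j ∈ Finset.range (n + 2), (-1 : R) ^ j * l j * sOp l (n + 1 - j) = 0 := by
  rw [Finset.sum_range_succ']
  have h : ∀ i ∈ Finset.range (n + 1),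
      (-1 : R) ^ (i + 1) * l (i + 1) * sOp l (n + 1 - (i + 1)) =
        -((-1 : R) ^ i * l (i + 1) * sOp l (n - i)) := by
    intro i hi
    have : n + 1 - (i + 1) = n - i := by omega
    rw [this, pow_succ]; ring
  rw [Finset.sum_congr rfl h, Finset.sum_neg_distrib, ← sOp_succ' l n]
  simp [hl]

lemma AB (l : ℕ → R) (hl : l 0 = 1) :
    (PowerSeries.mk fun n => (-1 : R) ^ n * l n) * PowerSeries.mk (sOp l) = 1 := by
  ext n
  rw [PowerSeries.coeff_mul, Finset.Nat.sum_antidiagonal_eq_sum_range_succ_mk]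
  cases n with
  | zero => simp [hl, sOp]
  | succ n =>
    rw [PowerSeries.coeff_one]
    simp only [PowerSeries.coeff_mk, Nat.succ_ne_zero, if_false]
    rw [← keyA l hl n]

lemma PsiKos_coeff (l : ℕ → R) (m : ℕ) :
    PsiKos l m = PowerSeries.coeff (R := R) m
      (PowerSeries.mk (sOp l) * PowerSeries.mk (fun n => (-1 : R) ^ (n + 1) * (n : R) * l n)) := by
  rw [PowerSeries.coeff_mul, Finset.Nat.sum_antidiagonal_eq_sum_range_succ_mk, PsiKos]
  apply Finset.sum_congr rfl
  intro p _
  simp only [PowerSeries.coeff_mk]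
  ring

lemma master (l : ℕ → R) (hl : l 0 = 1) (k : ℕ) :
    ∑ s ∈ Finset.range (k + 1), (-1 : R) ^ s * l s * PsiKos l (k - s)
      = (-1 : R) ^ (k + 1) * (k : R) * l k := by
  have h1 : (PowerSeries.mk fun n => (-1 : R) ^ n * l n) *
      (PowerSeries.mk (sOp l) * PowerSeries.mk (fun n => (-1 : R) ^ (n + 1) * (n : R) * l n)) =
      PowerSeries.mk (fun n => (-1 : R) ^ (n + 1) * (n : R) * l n) := by
    rw [← mul_assoc, AB l hl, one_mul]
  have h2 := congrArg (PowerSeries.coeff (R := R) k) h1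
  rw [PowerSeries.coeff_mul, Finset.Nat.sum_antidiagonal_eq_sum_range_succ_mk] at h2
  simp only [PowerSeries.coeff_mk] at h2
  rw [← h2]
  apply Finset.sum_congr rfl
  intro s _
  rw [PsiKos_coeff]

lemma PsiKos_zero (l : ℕ → R) : PsiKos l 0 = 0 := by
  simp [PsiKos]

lemma newton (l : ℕ → R) (hl : l 0 = 1) (k : ℕ) (hk : 1 ≤ k) :
    PsiKos l k = (-1 : R) ^ (k + 1) * (k : R) * l k -
      ∑ s ∈ Finset.Ico 1 k, (-1 : R) ^ s * PsiKos l (k - s) * l s := by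
  have hm := master l hl k
  rw [Finset.range_eq_Ico, Finset.sum_eq_sum_Ico_succ_bot (by omega : 0 < k + 1),
    Finset.sum_Ico_succ_top (by omega : 1 ≤ k)] at hm
  simp only [pow_zero, hl, one_mul, Nat.sub_zero, Nat.sub_self, PsiKos_zero, mul_zero,
    add_zero] at hm
  have h : ∑ s ∈ Finset.Ico 1 k, (-1 : R) ^ s * PsiKos l (k - s) * l s
      = ∑ s ∈ Finset.Ico 1 k, (-1 : R) ^ s * l s * PsiKos l (k - s) :=
    Finset.sum_congr rfl fun s _ => by ring
  rw [h]; linear_combination hm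

lemma psiKos_eq_psiOp (l : ℕ → R) (hl : l 0 = 1) : ∀ k, PsiKos l k = psiOp l k := by
  intro k
  induction k using Nat.strong_induction_on with
  | _ k ih =>
    cases k with
    | zero => rw [PsiKos_zero, psiOp]
    | succ n =>
      rw [newton l hl (n + 1) (by omega), psiOp]
      have hre : ∑ s ∈ Finset.Ico 1 (n + 1), (-1 : R) ^ s * PsiKos l (n + 1 - s) * l s
          = ∑ i ∈ Finset.range n, (-1 : R) ^ (i + 1) * PsiKos l (n - i) * l (i + 1) := by
        rw [Finset.sum_Ico_eq_sum_range]
        simp only [Nat.add_sub_cancel]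
        apply Finset.sum_congr rfl
        intro i _
        rw [show n + 1 - (1 + i) = n - i by omega, add_comm 1 i]
      rw [hre]
      have : ∀ i ∈ Finset.range n,
          (-1 : R) ^ (i + 1) * PsiKos l (n - i) * l (i + 1)
            = -((-1 : R) ^ i * l (i + 1) * psiOp l (n - i)) := by
        intro i hi
        rw [ih (n - i) (by omega), pow_succ]; ring
      rw [Finset.sum_congr rfl this, Finset.sum_neg_distrib]
      push_cast
      ring

end Aux

theorem stmt15 {R : Type*} [CommRing R] [Algebra ℚ R] [LambdaRing R] (x : R) (k : ℕ)
    (hk : 1 ≤ k) :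
    (PsiKos (fun i => LambdaRing.lam i x) k =
        (-1 : R) ^ (k + 1) * (k : R) * LambdaRing.lam k x -
          ∑ s ∈ Finset.Ico 1 k,
            (-1 : R) ^ s * PsiKos (fun i => LambdaRing.lam i x) (k - s) * LambdaRing.lam s x) ∧
      PsiKos (fun i => LambdaRing.lam i x) k = psiOp (fun i => LambdaRing.lam i x) k := by
  have hl : (fun i => LambdaRing.lam i x) 0 = 1 := LambdaRing.lam_zero x
  exact ⟨newton _ hl k hk, psiKos_eq_psiOp _ hl k⟩
end
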